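/- Let a < b be real, let (z_n) be complex numbers, and let H be a positive integer. Then |Σ_{a < n < b} z_n|² ≤ ( 1 + (b−a)/H ) Σ_{|h| < H} ( 1 − |h|/H ) Σ_{a < n, n+h < b} z_{n+h} · conj(z_n), where the outer sum on the right is over integers h with |h| < H and the inner sum is over integers n with a < n < b and a < n + h < b. -/

import Mathlib

open Filter

lemma vdc_shift_sum (A B : ℤ) (H : ℕ) (g : ℤ → ℂ)
    (hg : ∀ n, n ∉ Finset.Ioo A B → g n = 0) (s : ℕ) (hs : s < H) :
    ∑ p ∈ Finset.Ioo (A + 1 - H) B, g (p + s) = ∑ n ∈ Finset.Ioo A B, g n := by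
  have h1 : ∑ p ∈ Finset.Ioo (A + 1 - H) B, g (p + (s : ℤ))
      = ∑ n ∈ Finset.Ioo (A + 1 - H + s) (B + s), g n := by
    rw [← Finset.map_add_right_Ioo, Finset.sum_map]
    simp [addRightEmbedding]
  rw [h1]
  refine (Finset.sum_subset ?_ ?_).symm
  · intro n hn
    simp only [Finset.mem_Ioo] at *
    omega
  · intro n _ hn
    exact hg n hn

lemma vdc_card_pairs (H : ℕ) (h : ℤ) :
    (((Finset.range H) ×ˢ (Finset.range H)).filter
      (fun rs : ℕ × ℕ => (rs.1 : ℤ) - (rs.2 : ℤ) = h)).card = H - h.natAbs := by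
  have himg : ((Finset.range H ×ˢ Finset.range H).filter
      (fun rs : ℕ × ℕ => (rs.1 : ℤ) - (rs.2 : ℤ) = h))
      = (Finset.range (H - h.natAbs)).image (fun k => (k + h.toNat, k + (-h).toNat)) := by
    ext ⟨r, s⟩
    simp only [Finset.mem_filter, Finset.mem_product, Finset.mem_range, Finset.mem_image,
      Prod.mk.injEq]
    constructor
    · rintro ⟨⟨hr, hs⟩, hd⟩
      exact ⟨r - h.toNat, by omega, by omega, by omega⟩
    · rintro ⟨k, hk, rfl, rfl⟩
      refine ⟨⟨by omega, by omega⟩, by omega⟩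
  rw [himg, Finset.card_image_of_injective, Finset.card_range]
  intro x y hxy
  simp only [Prod.mk.injEq] at hxy
  omega

/-- **Van der Corput's inequality.**
For `a < b`, complex numbers `(z_n)` and a positive integer `H`,
`|Σ_{a<n<b} z_n|² ≤ (1 + (b−a)/H) Σ_{|h|<H} (1 − |h|/H) Σ_{a<n, n+h<b} z_{n+h} conj(z_n)`
(the right-hand side is real, and we take its real part). -/
theorem van_der_corput_inequality
    (a b : ℝ) (hab : a < b) (z : ℤ → ℂ) (H : ℕ) (hH : 0 < H) :
    ‖∑ n ∈ Finset.Ioo ⌊a⌋ ⌈b⌉, z n‖ ^ 2 ≤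
      (1 + (b - a) / H) *
        (∑ h ∈ Finset.Ioo (-(H : ℤ)) (H : ℤ),
          (((1 - |(h : ℝ)| / H) : ℝ) : ℂ) *
            ∑ n ∈ (Finset.Ioo ⌊a⌋ ⌈b⌉).filter (fun n : ℤ => n + h ∈ Finset.Ioo ⌊a⌋ ⌈b⌉),
              z (n + h) * (starRingEnd ℂ) (z n)).re := by
  classical
  set A := ⌊a⌋ with hAdef
  set B := ⌈b⌉ with hBdef
  set I : Finset ℤ := Finset.Ioo A B with hIdef
  set w : ℤ → ℂ := fun n => if n ∈ I then z n else 0 with hwdef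
  set P : Finset ℤ := Finset.Ioo (A + 1 - H) B with hPdef
  set f : ℤ → ℂ := fun p => ∑ r ∈ Finset.range H, w (p + r) with hfdef
  set T : ℤ → ℂ := fun h =>
    ∑ n ∈ I.filter (fun n : ℤ => n + h ∈ I), z (n + h) * (starRingEnd ℂ) (z n) with hTdef
  have hw0 : ∀ n, n ∉ I → w n = 0 := fun n hn => if_neg hn
  have hHR : (0 : ℝ) < H := by exact_mod_cast hH
  -- Step 1 : ∑_{p∈P} f p = H * S
  have key1 : ∑ p ∈ P, f p = (H : ℂ) * ∑ n ∈ I, z n := by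
    calc ∑ p ∈ P, f p = ∑ r ∈ Finset.range H, ∑ p ∈ P, w (p + r) := Finset.sum_comm
      _ = ∑ _r ∈ Finset.range H, ∑ n ∈ I, w n := by
          refine Finset.sum_congr rfl fun r hr => ?_
          exact vdc_shift_sum A B H w hw0 r (Finset.mem_range.mp hr)
      _ = (H : ℂ) * ∑ n ∈ I, z n := by
          rw [Finset.sum_const, Finset.card_range, nsmul_eq_mul]
          congr 1
          exact Finset.sum_congr rfl fun n hn => if_pos hn
  -- Step 2 : ∑_{p∈P} |f p|² = ∑_{|h|<H} (H-|h|) T h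
  have key2 : ∑ p ∈ P, f p * (starRingEnd ℂ) (f p)
      = ∑ h ∈ Finset.Ioo (-(H : ℤ)) (H : ℤ), ((H - h.natAbs : ℕ) : ℂ) * T h := by
    have e1 : ∑ p ∈ P, f p * (starRingEnd ℂ) (f p)
        = ∑ rs ∈ (Finset.range H) ×ˢ (Finset.range H), T ((rs.1 : ℤ) - (rs.2 : ℤ)) := by
      have expand : ∀ p, f p * (starRingEnd ℂ) (f p)
          = ∑ rs ∈ (Finset.range H) ×ˢ (Finset.range H),
              w (p + rs.1) * (starRingEnd ℂ) (w (p + rs.2)) := by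
        intro p
        rw [hfdef]
        simp only [map_sum]
        rw [Finset.sum_mul_sum, Finset.sum_product]
      rw [Finset.sum_congr rfl fun p _ => expand p, Finset.sum_comm]
      refine Finset.sum_congr rfl fun rs hrs => ?_
      simp only [Finset.mem_product, Finset.mem_range] at hrs
      obtain ⟨r, s⟩ := rs
      obtain ⟨hr, hs⟩ := hrs
      set g : ℤ → ℂ := fun m => w (m + ((r : ℤ) - (s : ℤ))) * (starRingEnd ℂ) (w m) with hgdef
      have hg0 : ∀ n, n ∉ I → g n = 0 := by
        intro n hn
        simp only [hgdef, hw0 n hn, map_zero, mul_zero]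
      have happ : ∀ p : ℤ, w (p + (r : ℤ)) * (starRingEnd ℂ) (w (p + (s : ℤ))) = g (p + (s : ℤ)) := by
        intro p
        simp only [hgdef]
        ring_nf
      calc ∑ p ∈ P, w (p + (r : ℤ)) * (starRingEnd ℂ) (w (p + (s : ℤ)))
          = ∑ p ∈ P, g (p + (s : ℤ)) := Finset.sum_congr rfl fun p _ => happ p
        _ = ∑ n ∈ I, g n := vdc_shift_sum A B H g hg0 s hs
        _ = T ((r : ℤ) - (s : ℤ)) := by
            rw [hTdef]
            simp only [Finset.sum_filter]
            refine Finset.sum_congr rfl fun n hn => ?_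
            simp only [hgdef, hwdef]
            rw [if_pos hn]
            split_ifs with h'
            · rfl
            · simp
    rw [e1]
    have hmaps : ∀ rs ∈ (Finset.range H) ×ˢ (Finset.range H),
        (rs.1 : ℤ) - (rs.2 : ℤ) ∈ Finset.Ioo (-(H : ℤ)) (H : ℤ) := by
      intro rs hrs
      simp only [Finset.mem_product, Finset.mem_range] at hrs
      simp only [Finset.mem_Ioo]
      omega
    rw [← Finset.sum_fiberwise_of_maps_to' hmaps]
    refine Finset.sum_congr rfl fun h hh => ?_
    rw [Finset.sum_const, vdc_card_pairs, nsmul_eq_mul]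
  -- Cauchy-Schwarz
  have hcs : ‖∑ p ∈ P, f p‖ ^ 2 ≤ (P.card : ℝ) * ∑ p ∈ P, ‖f p‖ ^ 2 := by
    calc ‖∑ p ∈ P, f p‖ ^ 2 ≤ (∑ p ∈ P, ‖f p‖) ^ 2 := by
          have := norm_sum_le P f
          nlinarith [norm_nonneg (∑ p ∈ P, f p)]
      _ ≤ (P.card : ℝ) * ∑ p ∈ P, ‖f p‖ ^ 2 := sq_sum_le_card_mul_sum_sq
  have hre : (∑ p ∈ P, f p * (starRingEnd ℂ) (f p)).re = ∑ p ∈ P, ‖f p‖ ^ 2 := by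
    rw [Complex.re_sum]
    refine Finset.sum_congr rfl fun p _ => ?_
    rw [Complex.mul_conj]
    simp [Complex.normSq_eq_norm_sq, ← Complex.ofReal_pow]
  -- relate RHS sum
  have hR : (H : ℝ) *
      (∑ h ∈ Finset.Ioo (-(H : ℤ)) (H : ℤ), (((1 - |(h : ℝ)| / H) : ℝ) : ℂ) * T h).re
      = ∑ p ∈ P, ‖f p‖ ^ 2 := by
    rw [← hre, key2, Complex.re_sum, Complex.re_sum, Finset.mul_sum]
    refine Finset.sum_congr rfl fun h hh => ?_
    simp only [Finset.mem_Ioo] at hh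
    have hna : (h.natAbs : ℝ) ≤ (H : ℝ) := by
      have : h.natAbs ≤ H := by omega
      exact_mod_cast this
    have hcast : ((H - h.natAbs : ℕ) : ℂ) = (((H - h.natAbs : ℕ) : ℝ) : ℂ) := by push_cast; ring
    rw [hcast, Complex.re_ofReal_mul, Complex.re_ofReal_mul]
    have habs : |(h : ℝ)| = (h.natAbs : ℝ) := by
      simp [Nat.cast_natAbs, Int.cast_abs]
    have hnat : ((H - h.natAbs : ℕ) : ℝ) = (H : ℝ) - (h.natAbs : ℝ) := by
      have : h.natAbs ≤ H := by omega
      push_cast [this]; ring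
    rw [habs, hnat]
    field_simp
    try ring
  have hsum0 : (0 : ℝ) ≤ ∑ p ∈ P, ‖f p‖ ^ 2 := Finset.sum_nonneg fun p _ => by positivity
  set Rre : ℝ :=
    (∑ h ∈ Finset.Ioo (-(H : ℤ)) (H : ℤ), (((1 - |(h : ℝ)| / H) : ℝ) : ℂ) * T h).re with hRre
  have hRre0 : 0 ≤ Rre := by nlinarith
  -- card bound
  have hcard : (P.card : ℝ) ≤ (H : ℝ) + (b - a) := by
    have h1 : ((P.card : ℤ) : ℝ) = ((max (B - (A + 1 - H) - 1) 0 : ℤ) : ℝ) := by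
      rw [hPdef, Int.card_Ioo]
      rw [Int.toNat_eq_max]
    have hb1 : (B : ℝ) < b + 1 := Int.ceil_lt_add_one b
    have ha1 : a - 1 < (A : ℝ) := Int.sub_one_lt_floor a
    have h2 : ((max (B - (A + 1 - H) - 1) 0 : ℤ) : ℝ) ≤ (H : ℝ) + (b - a) := by
      rw [Int.cast_max]
      apply max_le
      · push_cast
        linarith
      · push_cast
        linarith
    calc (P.card : ℝ) = ((P.card : ℤ) : ℝ) := by push_cast; ring
      _ ≤ (H : ℝ) + (b - a) := h1 ▸ h2
  -- assemble
  have hnorm : ‖∑ p ∈ P, f p‖ = (H : ℝ) * ‖∑ n ∈ I, z n‖ := by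
    rw [key1]
    simp [map_mul, Complex.norm_natCast]
  have hfinal : (H : ℝ) ^ 2 * (‖∑ n ∈ I, z n‖ ^ 2)
      ≤ (H : ℝ) ^ 2 * ((1 + (b - a) / H) * Rre) := by
    have e2 : (H : ℝ) ^ 2 * (‖∑ n ∈ I, z n‖ ^ 2) = ‖∑ p ∈ P, f p‖ ^ 2 := by
      rw [hnorm]; ring
    have e3 : (P.card : ℝ) * ∑ p ∈ P, ‖f p‖ ^ 2 ≤ ((H : ℝ) + (b - a)) * ((H : ℝ) * Rre) := by
      rw [← hR]
      exact mul_le_mul_of_nonneg_right hcard (by nlinarith)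
    have e4 : ((H : ℝ) + (b - a)) * ((H : ℝ) * Rre) = (H : ℝ) ^ 2 * ((1 + (b - a) / H) * Rre) := by
      field_simp
    calc (H : ℝ) ^ 2 * (‖∑ n ∈ I, z n‖ ^ 2) = ‖∑ p ∈ P, f p‖ ^ 2 := e2
      _ ≤ (P.card : ℝ) * ∑ p ∈ P, ‖f p‖ ^ 2 := hcs
      _ ≤ ((H : ℝ) + (b - a)) * ((H : ℝ) * Rre) := e3
      _ = (H : ℝ) ^ 2 * ((1 + (b - a) / H) * Rre) := e4
  exact le_of_mul_le_mul_left hfinal (by positivity)
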